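/- Let T > 0 and p ∈ [0, 1/2). There exists a constant C > 0, independent of N, such that for every positive integer N with h := T/N < 1, Σ_{m≥1} |δ^N(N-1, m)| ≤ C h^{p+1/2}, where δ^N(N-1, m) := λ_m^{-p} [ ((1+λ_m h)^{-2} - e^{-2 λ_m h}) s_m + h (1+λ_m h)^{-2} - (1 - e^{-2 λ_m h})/(2 λ_m) ] and s_m := (1/(2 λ_m + λ_m² h)) (1 - (1+λ_m h)^{-2(N-1)}). -/

import Mathlib

noncomputable def lam (m : ℕ) : ℝ := (Real.pi * m) ^ 2 / 2

open Finset

lemma my_bern {c u : ℝ} (hc0 : 0 < c) (hc1 : c ≤ 1) (hu1 : u ≤ 1) :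
    (1 - u) ^ c ≤ 1 - c * u := by
  have h := rpow_one_add_le_one_add_mul_self (s := -u) (by linarith) hc0.le hc1
  have e : (1 : ℝ) + -u = 1 - u := by ring
  rw [e] at h
  linarith [h]

lemma my_sum_pow_le {c : ℝ} (hc0 : 0 < c) (hc1 : c ≤ 1) (M : ℕ) :
    ∑ m ∈ Finset.range M, ((m : ℝ) + 1) ^ (c - 1) ≤ (M : ℝ) ^ c / c := by
  induction M with
  | zero => simp [Real.zero_rpow hc0.ne']
  | succ M ih =>
    rw [Finset.sum_range_succ]
    have hM1 : (1 : ℝ) ≤ (M : ℝ) + 1 := by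
      have : (0:ℝ) ≤ (M:ℝ) := Nat.cast_nonneg M
      linarith
    have hM0 : (0 : ℝ) < (M : ℝ) + 1 := by positivity
    have hb := my_bern hc0 hc1 (u := 1 / ((M : ℝ) + 1))
      (by rw [div_le_one hM0]; linarith)
    have hMeq : (M : ℝ) = ((M : ℝ) + 1) * (1 - 1 / ((M : ℝ) + 1)) := by
      field_simp
      ring
    have hMc : (M : ℝ) ^ c = ((M : ℝ) + 1) ^ c * (1 - 1 / ((M : ℝ) + 1)) ^ c := by
      rw [hMeq, Real.mul_rpow hM0.le (by rw [sub_nonneg, div_le_one hM0]; linarith),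
        ← hMeq]
    have hpow : ((M : ℝ) + 1) ^ c / ((M : ℝ) + 1) = ((M : ℝ) + 1) ^ (c - 1) := by
      rw [Real.rpow_sub hM0, Real.rpow_one]
    have hpos : (0 : ℝ) < ((M : ℝ) + 1) ^ c := Real.rpow_pos_of_pos hM0 c
    have key : c * ((M : ℝ) + 1) ^ (c - 1) ≤ ((M : ℝ) + 1) ^ c - (M : ℝ) ^ c := by
      have h2 : (M : ℝ) ^ c ≤ ((M : ℝ) + 1) ^ c * (1 - c * (1 / ((M : ℝ) + 1))) := by
        rw [hMc]
        exact mul_le_mul_of_nonneg_left hb hpos.le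
      have h3 : ((M : ℝ) + 1) ^ c * (c * (1 / ((M : ℝ) + 1))) = c * ((M : ℝ) + 1) ^ (c - 1) := by
        rw [← hpow]; ring
      nlinarith [h2, h3]
    have hfin : ((M : ℕ) : ℝ) ^ c / c + ((M : ℝ) + 1) ^ (c - 1) ≤ (((M : ℕ) + 1 : ℕ) : ℝ) ^ c / c := by
      push_cast
      rw [div_add' _ _ _ hc0.ne', div_le_div_iff₀ hc0 hc0]
      nlinarith [key]
    calc ∑ m ∈ Finset.range M, ((m : ℝ) + 1) ^ (c - 1) + ((M : ℝ) + 1) ^ (c - 1)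
        ≤ ((M : ℕ) : ℝ) ^ c / c + ((M : ℝ) + 1) ^ (c - 1) := by linarith [ih]
      _ ≤ _ := hfin

lemma my_tail_le (M : ℕ) (hM : 1 ≤ M) :
    ∑' m : ℕ, (((m : ℝ) + M + 1) ^ 2)⁻¹ ≤ ((M : ℝ))⁻¹ := by
  have hMR : (1 : ℝ) ≤ (M : ℝ) := by exact_mod_cast hM
  apply Real.tsum_le_of_sum_range_le (fun n => by positivity)
  intro n
  have hstep : ∀ i ∈ Finset.range n,
      (((i : ℝ) + M + 1) ^ 2)⁻¹ ≤ ((i : ℝ) + M)⁻¹ - (((i + 1 : ℕ) : ℝ) + M)⁻¹ := by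
    intro i _
    have h1 : (0 : ℝ) < (i : ℝ) + M := by positivity
    have h2 : (0 : ℝ) < (i : ℝ) + M + 1 := by positivity
    push_cast
    rw [inv_sub_inv h1.ne' (by positivity : ((i:ℝ) + 1 + M) ≠ 0),
      inv_eq_one_div, div_le_div_iff₀ (by positivity) (by positivity)]
    nlinarith [h1, h2]
  calc ∑ i ∈ Finset.range n, (((i : ℝ) + M + 1) ^ 2)⁻¹
      ≤ ∑ i ∈ Finset.range n, (((i : ℝ) + M)⁻¹ - (((i + 1 : ℕ) : ℝ) + M)⁻¹) :=
        Finset.sum_le_sum hstep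
    _ = ((0 : ℝ) + M)⁻¹ - ((n : ℝ) + M)⁻¹ := by
        have := Finset.sum_range_sub' (fun i => ((i : ℝ) + M)⁻¹) n
        simpa using this
    _ ≤ ((M : ℝ))⁻¹ := by
        rw [zero_add]
        have : (0:ℝ) ≤ ((n : ℝ) + M)⁻¹ := by positivity
        linarith

set_option maxHeartbeats 1000000 in
lemma my_bracket {l h : ℝ} (hl : 0 < l) (hh : 0 < h) (n : ℕ) :
    |(((1 + l * h) ^ 2)⁻¹ - Real.exp (-2 * l * h)) *
        ((1 / (2 * l + l ^ 2 * h)) * (1 - ((1 + l * h) ^ n)⁻¹)) +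
      h * ((1 + l * h) ^ 2)⁻¹ - (1 - Real.exp (-2 * l * h)) / (2 * l)| ≤ 4 * min h l⁻¹ := by
  set x := l * h with hx
  have hx0 : 0 < x := mul_pos hl hh
  have h1x : (1 : ℝ) < 1 + x := by linarith
  set I := ((1 + x) ^ 2)⁻¹ with hI
  set E := Real.exp (-2 * l * h) with hE
  have hEx : E = Real.exp (-(2 * x)) := by rw [hE, hx]; ring_nf
  have hI0 : 0 < I := by positivity
  have hI1 : I ≤ 1 := by
    rw [hI]
    rw [inv_le_one_iff₀]
    right; nlinarith
  have hE0 : 0 < E := Real.exp_pos _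
  have hE1 : E ≤ 1 := by
    rw [hEx, Real.exp_le_one_iff]
    linarith
  have hEl : 1 - 2 * x ≤ E := by
    rw [hEx]
    have := Real.add_one_le_exp (-(2 * x))
    linarith
  have hIl : 1 - 2 * x ≤ I := by
    rw [hI, inv_eq_one_div, le_div_iff₀ (by positivity)]
    nlinarith [mul_nonneg (mul_nonneg hx0.le hx0.le) hx0.le, sq_nonneg x]
  have hI2 : I ≤ (2 * x)⁻¹ := by
    rw [hI]
    exact inv_anti₀ (by positivity) (by nlinarith)
  set Q := ((1 + x) ^ n)⁻¹ with hQ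
  have hQ0 : 0 < Q := by positivity
  have hQ1 : Q ≤ 1 := by
    rw [hQ, inv_le_one_iff₀]; right; exact one_le_pow₀ h1x.le
  set s := (1 / (2 * l + l ^ 2 * h)) * (1 - Q) with hs
  have hden : 0 < 2 * l + l ^ 2 * h := by positivity
  have hs0 : 0 ≤ s := by
    apply mul_nonneg (by positivity)
    linarith
  have hsle : s ≤ 1 / (2 * l) := by
    rw [hs]
    calc (1 / (2 * l + l ^ 2 * h)) * (1 - Q) ≤ (1 / (2 * l)) * 1 := by
          apply mul_le_mul _ (by linarith) (by linarith) (by positivity)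
          apply one_div_le_one_div_of_le (by positivity)
          nlinarith
      _ = 1 / (2 * l) := mul_one _
  have hA2 : |I - E| ≤ 2 * x := abs_le.mpr ⟨by linarith, by linarith⟩
  have hA1 : |I - E| ≤ 1 := abs_le.mpr ⟨by linarith, by linarith⟩
  have hAs1 : |(I - E) * s| ≤ h := by
    rw [abs_mul, abs_of_nonneg hs0]
    calc |I - E| * s ≤ (2 * x) * (1 / (2 * l)) :=
          mul_le_mul hA2 hsle hs0 (by positivity)
      _ = h := by rw [hx]; field_simp
  have hAs2 : |(I - E) * s| ≤ 1 / (2 * l) := by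
    rw [abs_mul, abs_of_nonneg hs0]
    calc |I - E| * s ≤ 1 * (1 / (2 * l)) := mul_le_mul hA1 hsle hs0 zero_le_one
      _ = 1 / (2 * l) := one_mul _
  have hHI0 : 0 ≤ h * I := by positivity
  have hHI1 : h * I ≤ h := by nlinarith
  have hHI2 : h * I ≤ 1 / (2 * l) := by
    calc h * I ≤ h * (2 * x)⁻¹ := by nlinarith
      _ = 1 / (2 * l) := by rw [hx]; field_simp
  set D := (1 - E) / (2 * l) with hD
  have hD0 : 0 ≤ D := by
    apply div_nonneg (by linarith) (by positivity)
  have hD1 : D ≤ h := by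
    rw [hD, div_le_iff₀ (by positivity)]
    rw [hx] at hEl
    nlinarith [hEl]
  have hD2 : D ≤ 1 / (2 * l) := by
    rw [hD, div_le_div_iff_of_pos_right (by positivity)]
    linarith
  have habs : |(I - E) * s + h * I - D| ≤ |(I - E) * s| + |h * I - D| := by
    calc |(I - E) * s + h * I - D| = |(I - E) * s + (h * I - D)| := by ring_nf
      _ ≤ _ := abs_add_le _ _
  have hsub1 : |h * I - D| ≤ h := abs_le.mpr ⟨by linarith, by linarith⟩
  have hsub2 : |h * I - D| ≤ 1 / (2 * l) := abs_le.mpr ⟨by linarith, by linarith⟩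
  have hb1 : |(I - E) * s + h * I - D| ≤ 2 * h := by linarith
  have hb2 : |(I - E) * s + h * I - D| ≤ l⁻¹ := by
    have heq : 1 / (2 * l) + 1 / (2 * l) = l⁻¹ := by
      rw [← add_div, inv_eq_one_div, div_eq_div_iff (by positivity) hl.ne']
      ring
    linarith
  rcases min_cases h l⁻¹ with ⟨hmin, hle⟩ | ⟨hmin, hle⟩ <;> rw [hmin]
  · linarith
  · have : 0 < l⁻¹ := by positivity
    linarith

/-- Lemma 3.9: bound on the last term `δ^N(N-1,·)` of the weak-error
decomposition. -/
theorem stmt_8 (T : ℝ) (hT : 0 < T) (p : ℝ) (hp0 : 0 ≤ p) (hp : p < 1 / 2) :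
    ∃ C : ℝ, 0 < C ∧ ∀ N : ℕ, 0 < N → T / N < 1 →
      ∑' m : ℕ,
        |lam (m + 1) ^ (-p) *
          ((((1 + lam (m + 1) * (T / N)) ^ 2)⁻¹ - Real.exp (-2 * lam (m + 1) * (T / N))) *
              ((1 / (2 * lam (m + 1) + lam (m + 1) ^ 2 * (T / N))) *
                (1 - ((1 + lam (m + 1) * (T / N)) ^ (2 * (N - 1)))⁻¹)) +
            (T / N) * ((1 + lam (m + 1) * (T / N)) ^ 2)⁻¹ -
            (1 - Real.exp (-2 * lam (m + 1) * (T / N))) / (2 * lam (m + 1)))| ≤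
        C * (T / N) ^ (p + 1 / 2) := by
  have hc0 : (0:ℝ) < 1 - 2 * p := by linarith
  refine ⟨8 / (1 - 2 * p) + 4, by positivity, ?_⟩
  intro N hN hTN
  set h : ℝ := T / N with hdef
  have hh0 : 0 < h := div_pos hT (by exact_mod_cast hN)
  have hh1 : h < 1 := hTN
  have hlam0 : ∀ m : ℕ, 0 < lam (m + 1) := by
    intro m
    unfold lam
    have hπ : (0:ℝ) < Real.pi := Real.pi_pos
    have : (0:ℝ) < ((m+1 : ℕ) : ℝ) := by positivity
    positivity
  have hlam_ge : ∀ m : ℕ, ((m:ℝ) + 1) ^ 2 ≤ lam (m + 1) := by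
    intro m
    unfold lam
    have hπ : 3 < Real.pi := Real.pi_gt_three
    have h1 : (0:ℝ) ≤ (m:ℝ) + 1 := by positivity
    push_cast
    nlinarith [mul_nonneg (mul_nonneg h1 h1) (by nlinarith : (0:ℝ) ≤ Real.pi ^ 2 - 2)]
  set g : ℕ → ℝ := fun m => 4 * ((m:ℝ) + 1) ^ (-(2*p)) * min h ((((m:ℝ) + 1) ^ 2)⁻¹) with hgdef
  have hgnn : ∀ m, 0 ≤ g m := by
    intro m
    apply mul_nonneg (by positivity)
    exact le_min hh0.le (by positivity)
  -- pointwise bound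
  have key : ∀ m : ℕ,
      |lam (m + 1) ^ (-p) *
        ((((1 + lam (m + 1) * h) ^ 2)⁻¹ - Real.exp (-2 * lam (m + 1) * h)) *
            ((1 / (2 * lam (m + 1) + lam (m + 1) ^ 2 * h)) *
              (1 - ((1 + lam (m + 1) * h) ^ (2 * (N - 1)))⁻¹)) +
          h * ((1 + lam (m + 1) * h) ^ 2)⁻¹ -
          (1 - Real.exp (-2 * lam (m + 1) * h)) / (2 * lam (m + 1)))| ≤ g m := by
    intro m
    have hb := my_bracket (hlam0 m) hh0 (2 * (N - 1))
    rw [abs_mul, abs_of_nonneg (Real.rpow_nonneg (hlam0 m).le _)]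
    have h1 : lam (m + 1) ^ (-p) ≤ (((m:ℝ) + 1) ^ 2) ^ (-p) :=
      Real.rpow_le_rpow_of_nonpos (by positivity) (hlam_ge m) (by linarith)
    have h2 : ((((m:ℝ) + 1) ^ 2) : ℝ) ^ (-p) = ((m:ℝ) + 1) ^ (-(2*p)) := by
      rw [← Real.rpow_natCast ((m:ℝ) + 1) 2, ← Real.rpow_mul (by positivity)]
      norm_num
    have h3 : min h (lam (m + 1))⁻¹ ≤ min h ((((m:ℝ) + 1) ^ 2)⁻¹) :=
      min_le_min le_rfl (inv_anti₀ (by positivity) (hlam_ge m))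
    have hmin0 : 0 ≤ min h (lam (m + 1))⁻¹ := le_min hh0.le (inv_nonneg.mpr (hlam0 m).le)
    calc lam (m + 1) ^ (-p) * |_| ≤ lam (m + 1) ^ (-p) * (4 * min h (lam (m + 1))⁻¹) :=
          mul_le_mul_of_nonneg_left hb (Real.rpow_nonneg (hlam0 m).le _)
      _ ≤ ((m:ℝ) + 1) ^ (-(2*p)) * (4 * min h ((((m:ℝ) + 1) ^ 2)⁻¹)) := by
          apply mul_le_mul (h2 ▸ h1) (by linarith) (by linarith) (Real.rpow_nonneg (by positivity) _)
      _ = g m := by rw [hgdef]; ring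
  -- summability
  have hbase : Summable (fun m : ℕ => ((((m:ℝ) + 1) ^ 2)⁻¹)) := by
    have h0 : Summable (fun n : ℕ => (((n:ℝ) ^ 2)⁻¹)) := by
      simpa [one_div] using Real.summable_one_div_nat_pow.mpr (le_refl 2)
    have h1 := (summable_nat_add_iff 1).mpr h0
    exact h1.congr (fun n => by push_cast; ring_nf)
  have hg : Summable g := by
    apply Summable.of_nonneg_of_le hgnn _ (hbase.mul_left 4)
    intro m
    have e1 : ((m:ℝ) + 1) ^ (-(2*p)) ≤ 1 :=
      Real.rpow_le_one_of_one_le_of_nonpos (by simp [Nat.cast_nonneg]) (by linarith)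
    have e2 : min h ((((m:ℝ) + 1) ^ 2)⁻¹) ≤ (((m:ℝ) + 1) ^ 2)⁻¹ := min_le_right _ _
    have e0 : 0 ≤ min h ((((m:ℝ) + 1) ^ 2)⁻¹) := le_min hh0.le (by positivity)
    calc g m = (4 * ((m:ℝ) + 1) ^ (-(2*p))) * min h ((((m:ℝ) + 1) ^ 2)⁻¹) := by
          rw [hgdef]
      _ ≤ (4 * 1) * (((m:ℝ) + 1) ^ 2)⁻¹ := by
          apply mul_le_mul (by nlinarith [e1, Real.rpow_nonneg (by positivity : (0:ℝ) ≤ (m:ℝ)+1) (-(2*p))]) e2 e0 (by norm_num)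
      _ = 4 * (((m:ℝ) + 1) ^ 2)⁻¹ := by ring
  have hds : Summable (fun m : ℕ =>
      |lam (m + 1) ^ (-p) *
        ((((1 + lam (m + 1) * h) ^ 2)⁻¹ - Real.exp (-2 * lam (m + 1) * h)) *
            ((1 / (2 * lam (m + 1) + lam (m + 1) ^ 2 * h)) *
              (1 - ((1 + lam (m + 1) * h) ^ (2 * (N - 1)))⁻¹)) +
          h * ((1 + lam (m + 1) * h) ^ 2)⁻¹ -
          (1 - Real.exp (-2 * lam (m + 1) * h)) / (2 * lam (m + 1)))|) :=
    Summable.of_nonneg_of_le (fun m => abs_nonneg _) key hg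
  -- the split point
  set t := Real.sqrt h with ht
  have ht0 : 0 < t := Real.sqrt_pos.mpr hh0
  have ht1 : t ≤ 1 := by
    rw [ht]
    calc Real.sqrt h ≤ Real.sqrt 1 := Real.sqrt_le_sqrt hh1.le
      _ = 1 := Real.sqrt_one
  have ht2 : t ^ 2 = h := Real.sq_sqrt hh0.le
  set M := ⌈1 / t⌉₊ with hMdef
  have hMl : 1 / t ≤ (M:ℝ) := Nat.le_ceil _
  have hM1 : 1 ≤ M := by
    rw [hMdef]
    exact Nat.one_le_iff_ne_zero.mpr (Nat.ceil_pos.mpr (by positivity)).ne'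
  have hMR0 : (0:ℝ) < (M:ℝ) := lt_of_lt_of_le (by positivity) hMl
  have hMu : (M:ℝ) ≤ 2 / t := by
    have hceil := Nat.ceil_lt_add_one (le_of_lt (by positivity : (0:ℝ) < 1/t))
    have h2 : 1/t + 1 ≤ 2/t := by
      have ha : (1:ℝ) + t ≤ 2 := by linarith
      have hb : (1 + t)/t ≤ 2/t := (div_le_div_iff_of_pos_right ht0).mpr ha
      have hc : 1/t + 1 = (1 + t)/t := by field_simp
      linarith [hb]
    rw [hMdef]
    linarith [hceil]
  -- head bound
  have hhead : ∑ m ∈ Finset.range M, g m ≤ 4 * h * ((M:ℝ) ^ (1 - 2*p) / (1 - 2*p)) := by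
    have hstep : ∀ m ∈ Finset.range M, g m ≤ 4 * h * ((m:ℝ) + 1) ^ ((1 - 2*p) - 1) := by
      intro m _
      have he : (1 - 2*p) - 1 = -(2*p) := by ring
      rw [he]
      have hm : min h ((((m:ℝ) + 1) ^ 2)⁻¹) ≤ h := min_le_left _ _
      calc g m = 4 * ((m:ℝ) + 1) ^ (-(2*p)) * min h ((((m:ℝ) + 1) ^ 2)⁻¹) := by rw [hgdef]
        _ ≤ 4 * ((m:ℝ) + 1) ^ (-(2*p)) * h := by
            apply mul_le_mul_of_nonneg_left hm
            positivity
        _ = 4 * h * ((m:ℝ) + 1) ^ (-(2*p)) := by ring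
    calc ∑ m ∈ Finset.range M, g m
        ≤ ∑ m ∈ Finset.range M, 4 * h * ((m:ℝ) + 1) ^ ((1 - 2*p) - 1) :=
          Finset.sum_le_sum hstep
      _ = 4 * h * ∑ m ∈ Finset.range M, ((m:ℝ) + 1) ^ ((1 - 2*p) - 1) := by
          rw [Finset.mul_sum]
      _ ≤ 4 * h * ((M:ℝ) ^ (1 - 2*p) / (1 - 2*p)) := by
          apply mul_le_mul_of_nonneg_left (my_sum_pow_le hc0 (by linarith) M)
          positivity
  -- tail bound
  have htailsum : Summable (fun m : ℕ => (((m:ℝ) + M + 1) ^ 2)⁻¹) := by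
    apply Summable.of_nonneg_of_le (fun m => by positivity) _ hbase
    intro m
    apply inv_anti₀ (by positivity)
    have : (0:ℝ) ≤ (M:ℝ) := Nat.cast_nonneg M
    nlinarith [(Nat.cast_nonneg m : (0:ℝ) ≤ (m:ℝ))]
  have htail : ∑' m : ℕ, g (m + M) ≤ 4 * ((M:ℝ) ^ (-(2*p)) * (M:ℝ)⁻¹) := by
    have hstep : ∀ m : ℕ, g (m + M) ≤ 4 * (M:ℝ) ^ (-(2*p)) * (((m:ℝ) + M + 1) ^ 2)⁻¹ := by
      intro m
      have hcast : ((m + M : ℕ) : ℝ) + 1 = (m:ℝ) + M + 1 := by push_cast; ring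
      have ha0 : (0:ℝ) < (m:ℝ) + M + 1 := by positivity
      have hMa : (M:ℝ) ≤ (m:ℝ) + M + 1 := by
        have : (0:ℝ) ≤ (m:ℝ) := Nat.cast_nonneg m
        linarith
      have e1 : ((m:ℝ) + M + 1) ^ (-(2*p)) ≤ (M:ℝ) ^ (-(2*p)) :=
        Real.rpow_le_rpow_of_nonpos hMR0 hMa (by linarith)
      have e2 : min h ((((m:ℝ) + M + 1) ^ 2)⁻¹) ≤ (((m:ℝ) + M + 1) ^ 2)⁻¹ := min_le_right _ _
      have e0 : 0 ≤ min h ((((m:ℝ) + M + 1) ^ 2)⁻¹) := le_min hh0.le (by positivity)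
      calc g (m + M) = 4 * (((m:ℝ) + M + 1)) ^ (-(2*p)) * min h ((((m:ℝ) + M + 1) ^ 2)⁻¹) := by
            rw [hgdef]; simp only [hcast]
        _ ≤ 4 * (M:ℝ) ^ (-(2*p)) * (((m:ℝ) + M + 1) ^ 2)⁻¹ := by
            apply mul_le_mul (by nlinarith [e1]) e2 e0
            positivity
    calc ∑' m : ℕ, g (m + M)
        ≤ ∑' m : ℕ, 4 * (M:ℝ) ^ (-(2*p)) * (((m:ℝ) + M + 1) ^ 2)⁻¹ :=
          Summable.tsum_le_tsum hstep ((summable_nat_add_iff M).mpr hg) (htailsum.mul_left _)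
      _ = 4 * (M:ℝ) ^ (-(2*p)) * ∑' m : ℕ, (((m:ℝ) + M + 1) ^ 2)⁻¹ := tsum_mul_left
      _ ≤ 4 * (M:ℝ) ^ (-(2*p)) * (M:ℝ)⁻¹ := by
          apply mul_le_mul_of_nonneg_left (my_tail_le M hM1)
          positivity
      _ = 4 * ((M:ℝ) ^ (-(2*p)) * (M:ℝ)⁻¹) := by ring
  -- translate to powers of t
  have key1 : h = t ^ (2:ℝ) := by
    rw [show (2:ℝ) = ((2:ℕ):ℝ) by norm_num, Real.rpow_natCast, ht2]
  have hMc : (M:ℝ) ^ (1 - 2*p) ≤ 2 * t ^ (-(1 - 2*p)) := by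
    calc (M:ℝ) ^ (1 - 2*p) ≤ (2/t) ^ (1 - 2*p) :=
          Real.rpow_le_rpow (Nat.cast_nonneg M) hMu (by linarith)
      _ = (2:ℝ) ^ (1 - 2*p) * (t⁻¹) ^ (1 - 2*p) := by
          rw [div_eq_mul_inv, Real.mul_rpow (by norm_num) (by positivity)]
      _ ≤ 2 * t ^ (-(1 - 2*p)) := by
          rw [Real.inv_rpow ht0.le, ← Real.rpow_neg ht0.le]
          apply mul_le_mul_of_nonneg_right _ (Real.rpow_nonneg ht0.le _)
          calc (2:ℝ) ^ (1 - 2*p) ≤ (2:ℝ) ^ (1:ℝ) :=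
                Real.rpow_le_rpow_of_exponent_le one_le_two (by linarith)
            _ = 2 := Real.rpow_one 2
  have hM2p : (M:ℝ) ^ (-(2*p)) ≤ t ^ (2*p) := by
    have h1 : ((1:ℝ)/t) ^ (2*p) ≤ (M:ℝ) ^ (2*p) :=
      Real.rpow_le_rpow (by positivity) hMl (by linarith)
    rw [Real.rpow_neg (Nat.cast_nonneg M)]
    calc ((M:ℝ) ^ (2*p))⁻¹ ≤ (((1:ℝ)/t) ^ (2*p))⁻¹ :=
          inv_anti₀ (by positivity) h1
      _ = t ^ (2*p) := by rw [one_div, Real.inv_rpow ht0.le, inv_inv]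
  have hMinv : (M:ℝ)⁻¹ ≤ t := by
    have := inv_anti₀ (by positivity : (0:ℝ) < 1/t) hMl
    rwa [one_div, inv_inv] at this
  have eh : h * t ^ (-(1 - 2*p)) = t ^ (2*p + 1) := by
    rw [key1, ← Real.rpow_add ht0]
    congr 1
    ring
  have eu : t ^ (2*p) * t = t ^ (2*p + 1) := by
    nth_rewrite 2 [← Real.rpow_one t]
    rw [← Real.rpow_add ht0]
  have ehp : h ^ (p + 1/2) = t ^ (2*p + 1) := by
    rw [key1, ← Real.rpow_mul ht0.le]
    congr 1
    ring
  have head2 : 4 * h * ((M:ℝ) ^ (1 - 2*p) / (1 - 2*p)) ≤ 8 / (1 - 2*p) * t ^ (2*p + 1) := by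
    calc 4 * h * ((M:ℝ) ^ (1 - 2*p) / (1 - 2*p))
        ≤ 4 * h * ((2 * t ^ (-(1 - 2*p))) / (1 - 2*p)) := by
          apply mul_le_mul_of_nonneg_left _ (by positivity)
          exact (div_le_div_iff_of_pos_right hc0).mpr hMc
      _ = 8 / (1 - 2*p) * (h * t ^ (-(1 - 2*p))) := by ring
      _ = 8 / (1 - 2*p) * t ^ (2*p + 1) := by rw [eh]
  have tail2 : 4 * ((M:ℝ) ^ (-(2*p)) * (M:ℝ)⁻¹) ≤ 4 * t ^ (2*p + 1) := by
    rw [← eu]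
    apply mul_le_mul_of_nonneg_left _ (by norm_num)
    exact mul_le_mul hM2p hMinv (by positivity) (Real.rpow_nonneg ht0.le _)
  -- final assembly
  calc ∑' m : ℕ,
      |lam (m + 1) ^ (-p) *
        ((((1 + lam (m + 1) * h) ^ 2)⁻¹ - Real.exp (-2 * lam (m + 1) * h)) *
            ((1 / (2 * lam (m + 1) + lam (m + 1) ^ 2 * h)) *
              (1 - ((1 + lam (m + 1) * h) ^ (2 * (N - 1)))⁻¹)) +
          h * ((1 + lam (m + 1) * h) ^ 2)⁻¹ -
          (1 - Real.exp (-2 * lam (m + 1) * h)) / (2 * lam (m + 1)))|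
      ≤ ∑' m : ℕ, g m := Summable.tsum_le_tsum key hds hg
    _ = ∑ m ∈ Finset.range M, g m + ∑' m : ℕ, g (m + M) := (Summable.sum_add_tsum_nat_add M hg).symm
    _ ≤ 4 * h * ((M:ℝ) ^ (1 - 2*p) / (1 - 2*p)) + 4 * ((M:ℝ) ^ (-(2*p)) * (M:ℝ)⁻¹) :=
        add_le_add hhead htail
    _ ≤ 8 / (1 - 2*p) * t ^ (2*p + 1) + 4 * t ^ (2*p + 1) := add_le_add head2 tail2
    _ = (8 / (1 - 2*p) + 4) * h ^ (p + 1/2) := by rw [ehp]; ring
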